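/- Let H be a separable Hilbert space with self-adjoint operator Δ ≥ 0 with discrete spectrum and lowest eigenvalue λ₀, heat semigroup S_t, and μ_t the Gaussian measure with Fourier transform ψ ↦ exp(-½‖S_tψ‖²). Let A_t(ψ) = e^{tλ₀}ψ and μ̃_t = (A_t)_*μ_t. Then the Fourier transforms of μ̃_t converge pointwise, as t → ∞, to ψ ↦ exp(-½‖π₀ψ‖²), where π₀ is the orthogonal projection onto the λ₀-eigenspace; i.e., μ̃_t converges weakly to the standard Gaussian measure on the eigenspace Eig₀ pushed forward to H. -/

import Mathlib

open MeasureTheory Complex Filter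

/-- let `Δ ≥ 0` be self-adjoint with discrete spectrum and lowest
eigenvalue `λ₀` on a separable Hilbert space `H`, `S_t` its heat semigroup with
`e^{tλ₀}S_t → π₀` strongly (`π₀` the orthogonal projection onto the
`λ₀`-eigenspace `Eig₀`), and `μ_t` the Gaussian measure with Fourier transform
`ψ ↦ exp(-½‖S_tψ‖²)`.  With `A_t(ψ) = e^{tλ₀}ψ` and `μ̃_t = (A_t)_*μ_t`, the
Fourier transforms of `μ̃_t` converge pointwise as `t → ∞` to
`ψ ↦ exp(-½‖π₀ψ‖²)`, the Fourier transform of the standard Gaussian on `Eig₀`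
pushed forward to `H`. -/
theorem stmt_15 {H : Type*} [NormedAddCommGroup H] [InnerProductSpace ℂ H]
    [CompleteSpace H] [SecondCountableTopology H] [MeasurableSpace H] [BorelSpace H]
    (S : ℝ → H →L[ℂ] H) (lam0 : ℝ) (h0 : 0 ≤ lam0)
    (Eig0 : Submodule ℂ H) [CompleteSpace Eig0]
    (hstrong : ∀ ψ : H,
      Tendsto (fun t : ℝ => Real.exp (t * lam0) • S t ψ) atTop
        (nhds ((Submodule.orthogonalProjection Eig0 ψ : Eig0) : H)))
    (μ : ℝ → Measure H) (hprob : ∀ t : ℝ, 0 < t → IsProbabilityMeasure (μ t))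
    (hμ : ∀ t : ℝ, 0 < t → ∀ ψ : H,
      ∫ φ, Complex.exp (Complex.I * ((inner ℂ ψ φ : ℂ).re : ℂ)) ∂(μ t)
        = Real.exp (-‖S t ψ‖ ^ 2 / 2)) :
    ∀ ψ : H,
      Tendsto
        (fun t : ℝ =>
          ∫ φ, Complex.exp (Complex.I * ((inner ℂ ψ φ : ℂ).re : ℂ))
            ∂(Measure.map (fun x : H => Real.exp (t * lam0) • x) (μ t)))
        atTop
        (nhds ((Real.exp (-‖((Submodule.orthogonalProjection Eig0 ψ : Eig0) : H)‖ ^ 2 / 2) : ℝ) : ℂ)) := by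
  intro ψ
  have key : ∀ᶠ t : ℝ in atTop,
      (∫ φ, Complex.exp (Complex.I * ((inner ℂ ψ φ : ℂ).re : ℂ))
        ∂(Measure.map (fun x : H => Real.exp (t * lam0) • x) (μ t)))
      = ((Real.exp (-‖Real.exp (t * lam0) • S t ψ‖ ^ 2 / 2) : ℝ) : ℂ) := by
    filter_upwards [eventually_gt_atTop (0 : ℝ)] with t ht
    have hmap : Measurable (fun x : H => Real.exp (t * lam0) • x) :=
      (continuous_const_smul _).measurable
    rw [MeasureTheory.integral_map hmap.aemeasurable]
    · have heq : ∀ x : H,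
          Complex.exp (Complex.I * ((inner ℂ ψ (Real.exp (t * lam0) • x) : ℂ).re : ℂ))
          = Complex.exp (Complex.I
              * ((inner ℂ ((Real.exp (t * lam0) : ℂ) • ψ) x : ℂ).re : ℂ)) := by
        intro x
        congr 2
        rw [RCLike.real_smul_eq_coe_smul (K := ℂ), inner_smul_right, inner_smul_left,
          Complex.conj_ofReal]
        rfl
      calc (∫ x, Complex.exp (Complex.I * ((inner ℂ ψ (Real.exp (t * lam0) • x) : ℂ).re : ℂ)) ∂(μ t))
          = ∫ x, Complex.exp (Complex.I * ((inner ℂ ((Real.exp (t * lam0) : ℂ) • ψ) x : ℂ).re : ℂ)) ∂(μ t) := by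
            simp only [heq]
        _ = ((Real.exp (-‖S t ((Real.exp (t * lam0) : ℂ) • ψ)‖ ^ 2 / 2) : ℝ) : ℂ) :=
            hμ t ht _
        _ = ((Real.exp (-‖Real.exp (t * lam0) • S t ψ‖ ^ 2 / 2) : ℝ) : ℂ) := by
            have : ‖S t ((Real.exp (t * lam0) : ℂ) • ψ)‖ = ‖Real.exp (t * lam0) • S t ψ‖ := by
              rw [(S t).map_smul, norm_smul, norm_smul, Complex.norm_real]
            rw [this]
    · apply Continuous.aestronglyMeasurable
      exact Complex.continuous_exp.comp (continuous_const.mul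
        (Complex.continuous_ofReal.comp (Complex.continuous_re.comp
          (continuous_const.inner continuous_id))))
  have hcont : Tendsto (fun t : ℝ =>
      ((Real.exp (-‖Real.exp (t * lam0) • S t ψ‖ ^ 2 / 2) : ℝ) : ℂ)) atTop
      (nhds ((Real.exp (-‖((Submodule.orthogonalProjection Eig0 ψ : Eig0) : H)‖ ^ 2 / 2) : ℝ) : ℂ)) := by
    have hc : Continuous (fun v : H => ((Real.exp (-‖v‖ ^ 2 / 2) : ℝ) : ℂ)) :=
      Complex.continuous_ofReal.comp (Real.continuous_exp.comp (by fun_prop))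
    exact (hc.tendsto _).comp (hstrong ψ)
  exact hcont.congr' (key.mono fun t h => h.symm)
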